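/- The tensor product K_5 × K_2 has distinguishing number 3. -/

import Mathlib

open SimpleGraph Finset

/-- A colouring `c` of the vertices of `G` is distinguishing if the only
colour-preserving automorphism of `G` is the identity. -/
def IsDistinguishing {V : Type*} (G : SimpleGraph V) {k : ℕ} (c : V → Fin k) : Prop :=
  ∀ γ : G ≃g G, (∀ v, c (γ v) = c v) → ∀ v, γ v = v

/-- The distinguishing number of a finite graph `G`. -/
noncomputable def distinguishingNumber {V : Type*} [Fintype V] (G : SimpleGraph V) : ℕ :=
  sInf {k | ∃ c : V → Fin k, IsDistinguishing G c}

/-- The tensor product `K_5 × K_2`: vertices `(i, a)` with `i : Fin 5`, `a : Fin 2`,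
with `(i, a)` adjacent to `(j, b)` iff `i ≠ j` and `a ≠ b`. -/
def tensorK5K2 : SimpleGraph (Fin 5 × Fin 2) where
  Adj p q := p.1 ≠ q.1 ∧ p.2 ≠ q.2
  symm := by constructor; intro p q h; exact ⟨h.1.symm, h.2.symm⟩
  loopless := by constructor; intro p h; exact h.1 rfl

/-- The witness 3-colouring. -/
def myCol : Fin 5 × Fin 2 → Fin 3 :=
  fun p => if p.2 = 0 then ![0, 0, 0, 1, 1] p.1 else ![0, 1, 2, 0, 2] p.1

/-- The colour code: own colour plus counts of neighbour colours. -/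
def myCode (v : Fin 5 × Fin 2) : Fin 3 × (Fin 3 → ℕ) :=
  (myCol v, fun k =>
    (Finset.univ.filter (fun w : Fin 5 × Fin 2 =>
      (v.1 ≠ w.1 ∧ v.2 ≠ w.2) ∧ myCol w = k)).card)

lemma myCode_inj : ∀ v w, myCode v = myCode w → v = w := by decide

lemma adj_iff (v w : Fin 5 × Fin 2) :
    tensorK5K2.Adj v w ↔ (v.1 ≠ w.1 ∧ v.2 ≠ w.2) := Iff.rfl

lemma code_preserved (γ : tensorK5K2 ≃g tensorK5K2)
    (hc : ∀ v, myCol (γ v) = myCol v) (v : Fin 5 × Fin 2) :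
    myCode (γ v) = myCode v := by
  unfold myCode
  refine Prod.ext (hc v) ?_
  funext k
  dsimp only
  apply Finset.card_bij (fun w _ => γ.symm w)
  · intro w hw
    simp only [Finset.mem_filter, Finset.mem_univ, true_and] at hw ⊢
    rw [← adj_iff] at hw ⊢
    have h1 : tensorK5K2.Adj v (γ.symm w) := by
      have := γ.map_adj_iff (v := v) (w := γ.symm w)
      rw [γ.apply_symm_apply] at this
      exact this.1 hw.1
    exact ⟨h1, by rw [← hc (γ.symm w), γ.apply_symm_apply]; exact hw.2⟩
  · intro a ha b hb h
    exact γ.symm.injective h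
  · intro w hw
    simp only [Finset.mem_filter, Finset.mem_univ, true_and] at hw ⊢
    refine ⟨γ w, ⟨?_, ?_⟩, γ.symm_apply_apply w⟩
    · rw [← adj_iff] at hw ⊢
      exact (γ.map_adj_iff (v := v) (w := w)).2 hw.1
    · exact (hc w).trans hw.2

lemma exists_dist3 : ∃ c : Fin 5 × Fin 2 → Fin 3, IsDistinguishing tensorK5K2 c := by
  refine ⟨myCol, fun γ hγ v => ?_⟩
  exact myCode_inj _ _ (code_preserved γ hγ v)

lemma no_dist_small (k : ℕ) (hk : k ≤ 2) (c : Fin 5 × Fin 2 → Fin k) :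
    ¬ IsDistinguishing tensorK5K2 c := by
  intro hd
  -- pigeonhole: two indices with same colour pair
  have hcard : Fintype.card (Fin k × Fin k) < Fintype.card (Fin 5) := by
    simp only [Fintype.card_prod, Fintype.card_fin]
    nlinarith
  obtain ⟨i, j, hij, hcij⟩ :=
    Fintype.exists_ne_map_eq_of_card_lt
      (fun i : Fin 5 => (c (i, 0), c (i, 1))) hcard
  have h0 : c (i, 0) = c (j, 0) := congrArg Prod.fst hcij
  have h1 : c (i, 1) = c (j, 1) := congrArg Prod.snd hcij
  -- the swap automorphism
  set e : (Fin 5 × Fin 2) ≃ (Fin 5 × Fin 2) :=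
    Equiv.prodCongr (Equiv.swap i j) (Equiv.refl _) with he
  have hadj : ∀ v w : Fin 5 × Fin 2,
      tensorK5K2.Adj (e v) (e w) ↔ tensorK5K2.Adj v w := by
    intro v w
    simp only [he, Equiv.prodCongr_apply, Equiv.coe_refl, Prod.map, adj_iff]
    constructor
    · rintro ⟨h1, h2⟩
      exact ⟨fun h => h1 (by rw [h]), h2⟩
    · rintro ⟨h1, h2⟩
      exact ⟨fun h => h1 (Equiv.injective _ h), h2⟩
  let γ : tensorK5K2 ≃g tensorK5K2 := ⟨e, hadj _ _⟩
  have hpres : ∀ v, c (γ v) = c v := by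
    rintro ⟨x, a⟩
    show c (Equiv.swap i j x, a) = c (x, a)
    rcases eq_or_ne x i with rfl | hxi
    · rw [Equiv.swap_apply_left]
      fin_cases a
      · exact h0.symm
      · exact h1.symm
    rcases eq_or_ne x j with rfl | hxj
    · rw [Equiv.swap_apply_right]
      fin_cases a
      · exact h0
      · exact h1
    · rw [Equiv.swap_apply_of_ne_of_ne hxi hxj]
  have := hd γ hpres (i, 0)
  have : (Equiv.swap i j i, (0 : Fin 2)) = (i, 0) := this
  rw [Equiv.swap_apply_left] at this
  exact hij (congrArg Prod.fst this).symm

theorem distinguishingNumber_tensorK5K2 :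
    distinguishingNumber tensorK5K2 = 3 := by
  have h3 : 3 ∈ {k | ∃ c : Fin 5 × Fin 2 → Fin k, IsDistinguishing tensorK5K2 c} :=
    exists_dist3
  refine le_antisymm (Nat.sInf_le h3) ?_
  refine le_csInf ⟨3, h3⟩ ?_
  intro k hk
  by_contra h
  push_neg at h
  obtain ⟨c, hc⟩ := hk
  exact no_dist_small k (by omega) c hc
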